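/- The set of coefficient pairs (α_1, β_1, ..., α_s, β_s) satisfying the continuity conditions α_i x_ihi + β_i = α_{i+1} x_ihi + β_{i+1}, the convexity conditions α_i <= α_{i+1}, and the dominance conditions (6)-(7) of the paper (for a given continuous convex PWQ function φ) is nonempty. -/

import Mathlib

open Finset

private lemma telescope_le (f g : ℕ → ℝ) (a : ℕ) : ∀ b, a ≤ b →
    (∀ k, a ≤ k → k < b → f k - f (k+1) ≤ g (k+1)) →
    f a - f b ≤ ∑ m ∈ Finset.Ico (a+1) (b+1), g m := by
  refine Nat.le_induction ?_ ?_
  · intro _; simp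
  · intro n hn ih h
    have h1 := ih (fun k hk hk' => h k hk (by omega))
    have h2 := h n hn (by omega)
    rw [Finset.sum_Ico_succ_top (by omega)]
    linarith

private lemma aff_telescope (M : ℝ) (X : ℕ → ℝ) (t : ℝ) (a : ℕ) : ∀ b, a ≤ b →
    (M * b * t + -(M * ∑ m ∈ Finset.range b, X (m+1))) -
      (M * a * t + -(M * ∑ m ∈ Finset.range a, X (m+1))) =
      M * ∑ m ∈ Finset.Ico (a+1) (b+1), (t - X m) := by
  refine Nat.le_induction ?_ ?_
  · simp
  · intro n hn ih
    rw [Finset.sum_Ico_succ_top (by omega), Finset.sum_range_succ]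
    push_cast
    rw [mul_add (M) (∑ k ∈ Finset.Ico (a + 1) (n + 1), (t - X k)) (t - X (n+1)), ← ih]
    ring

private lemma pwq_nat_version (s : ℕ) (X Qn Ln Cn : ℕ → ℝ)
    (hmono : Monotone X)
    (hq : ∀ n, 0 ≤ Qn n)
    (hkink : ∀ k, k < s → 2 * Qn k * X (k+1) + Ln k ≤ 2 * Qn (k+1) * X (k+1) + Ln (k+1))
    (hcont : ∀ k, k < s → Qn k * (X (k+1))^2 + Ln k * X (k+1) + Cn k =
      Qn (k+1) * (X (k+1))^2 + Ln (k+1) * X (k+1) + Cn (k+1)) :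
    ∃ A B : ℕ → ℝ,
      (∀ k, A k * X (k+1) + B k = A (k+1) * X (k+1) + B (k+1)) ∧
      (∀ k, A k ≤ A (k+1)) ∧
      (∀ i j, j < i → i ≤ s →
        Qn j * (X i)^2 + Ln j * X i + Cn j + A j * X i + B j ≤
          Qn i * (X i)^2 + Ln i * X i + Cn i + A i * X i + B i) ∧
      (∀ i j, j < i → i ≤ s →
        Qn j * (X (i+1))^2 + Ln j * X (i+1) + Cn j + A j * X (i+1) + B j ≤
          Qn i * (X i)^2 + Ln i * X i + Cn i + A i * X i + B i +
            (X (i+1) - X i) * (2 * Qn i * X i + Ln i + A i)) ∧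
      (∀ i j, i < j → j ≤ s →
        Qn j * (X (i+1))^2 + Ln j * X (i+1) + Cn j + A j * X (i+1) + B j ≤
          Qn i * (X (i+1))^2 + Ln i * X (i+1) + Cn i + A i * X (i+1) + B i) ∧
      (∀ i j, i < j → j ≤ s →
        Qn j * (X i)^2 + Ln j * X i + Cn j + A j * X i + B j ≤
          Qn i * (X (i+1))^2 + Ln i * X (i+1) + Cn i + A i * X (i+1) + B i -
            (X (i+1) - X i) * (2 * Qn i * X (i+1) + Ln i + A i)) := by
  set Qs : ℝ := ∑ m ∈ Finset.range (s+1), Qn m with hQs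
  set W : ℝ := X (s+1) - X 0 with hW
  set M : ℝ := 2 * (Qs * W) with hM
  have hW0 : 0 ≤ W := sub_nonneg.2 (hmono (Nat.zero_le _))
  have hQs0 : 0 ≤ Qs := Finset.sum_nonneg fun m _ => hq m
  have hQW0 : 0 ≤ Qs * W := mul_nonneg hQs0 hW0
  have hM0 : 0 ≤ M := by positivity
  have hQb : ∀ n, n ≤ s → Qn n ≤ Qs := fun n hn =>
    Finset.single_le_sum (fun m _ => hq m) (Finset.mem_range.2 (by omega))
  -- per-segment extension bounds
  have keyR : ∀ k, k < s → ∀ t, X (k+1) ≤ t → t ≤ X (s+1) →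
      (Qn k * t^2 + Ln k * t + Cn k) - (Qn (k+1) * t^2 + Ln (k+1) * t + Cn (k+1)) ≤
        (Qs * W) * (t - X (k+1)) := by
    intro k hk t ht1 ht2
    have hu0 : 0 ≤ t - X (k+1) := by linarith
    have huW : t - X (k+1) ≤ W := by
      have := hmono (Nat.zero_le (k+1)); rw [hW]; linarith
    have h3 := hQb k (by omega)
    have h4 := hq k
    have h5 := hq (k+1)
    have h6 := hkink k hk
    have h7 := hcont k hk
    nlinarith [mul_nonneg hu0 (mul_nonneg (sub_nonneg.2 h3) hW0),
      mul_nonneg (mul_nonneg h4 hu0) (sub_nonneg.2 huW),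
      mul_nonneg h5 (mul_nonneg hu0 hu0),
      mul_nonneg hu0 (sub_nonneg.2 h6)]
  have keyL : ∀ k, k < s → ∀ t, X 0 ≤ t → t ≤ X (k+1) →
      (Qn (k+1) * t^2 + Ln (k+1) * t + Cn (k+1)) - (Qn k * t^2 + Ln k * t + Cn k) ≤
        (Qs * W) * (X (k+1) - t) := by
    intro k hk t ht1 ht2
    have hu0 : 0 ≤ X (k+1) - t := by linarith
    have huW : X (k+1) - t ≤ W := by
      have := hmono (show k+1 ≤ s+1 by omega); rw [hW]; linarith
    have h3 := hQb (k+1) (by omega)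
    have h4 := hq k
    have h5 := hq (k+1)
    have h6 := hkink k hk
    have h7 := hcont k hk
    nlinarith [mul_nonneg hu0 (mul_nonneg (sub_nonneg.2 h3) hW0),
      mul_nonneg (mul_nonneg h5 hu0) (sub_nonneg.2 huW),
      mul_nonneg h4 (mul_nonneg hu0 hu0),
      mul_nonneg hu0 (sub_nonneg.2 h6)]
  -- summed bounds
  have sumR : ∀ a b, a ≤ b → b ≤ s → ∀ t, X b ≤ t → t ≤ X (s+1) →
      (Qn a * t^2 + Ln a * t + Cn a) - (Qn b * t^2 + Ln b * t + Cn b) ≤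
        (Qs * W) * ∑ m ∈ Finset.Ico (a+1) (b+1), (t - X m) := by
    intro a b hab hbs t ht1 ht2
    rw [Finset.mul_sum]
    refine telescope_le (fun n => Qn n * t^2 + Ln n * t + Cn n)
      (fun m => (Qs*W) * (t - X m)) a b hab ?_
    intro k hk hk'
    exact keyR k (by omega) t (le_trans (hmono (by omega : k+1 ≤ b)) ht1) ht2
  have sumL : ∀ a b, a ≤ b → b ≤ s → ∀ t, X 0 ≤ t → t ≤ X (a+1) →
      (Qn b * t^2 + Ln b * t + Cn b) - (Qn a * t^2 + Ln a * t + Cn a) ≤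
        (Qs * W) * ∑ m ∈ Finset.Ico (a+1) (b+1), (X m - t) := by
    intro a b hab hbs t ht1 ht2
    have h := telescope_le (fun n => -(Qn n * t^2 + Ln n * t + Cn n))
      (fun m => (Qs*W) * (X m - t)) a b hab (by
        intro k hk hk'
        have := keyL k (by omega) t ht1 (le_trans ht2 (hmono (by omega : a+1 ≤ k+1)))
        linarith)
    rw [Finset.mul_sum]
    linarith [h]
  refine ⟨fun n => M * n, fun n => -(M * ∑ m ∈ Finset.range n, X (m+1)), ?_, ?_, ?_, ?_, ?_, ?_⟩
  · intro k
    dsimp only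
    rw [Finset.sum_range_succ]
    push_cast
    ring
  · intro k
    dsimp only
    push_cast
    linarith
  · -- (6a)
    intro i j hij his
    have htel := aff_telescope M X (X i) j i (le_of_lt hij)
    have hsum := sumR j i (le_of_lt hij) his (X i) le_rfl (hmono (by omega))
    have hnn : 0 ≤ ∑ m ∈ Finset.Ico (j+1) (i+1), (X i - X m) :=
      Finset.sum_nonneg fun m hm => sub_nonneg.2 (hmono (by
        have := Finset.mem_Ico.1 hm; omega))
    have hMsum : M * ∑ m ∈ Finset.Ico (j+1) (i+1), (X i - X m) =
        Qs * W * ∑ m ∈ Finset.Ico (j+1) (i+1), (X i - X m) +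
        Qs * W * ∑ m ∈ Finset.Ico (j+1) (i+1), (X i - X m) := by rw [hM]; ring
    have hpos := mul_nonneg hQW0 hnn
    dsimp only
    linarith
  · -- (6b)
    intro i j hij his
    have htel := aff_telescope M X (X (i+1)) j i (le_of_lt hij)
    have hsum := sumR j i (le_of_lt hij) his (X (i+1)) (hmono (by omega)) (hmono (by omega))
    have hnn : ∀ m ∈ Finset.Ico (j+1) (i+1), 0 ≤ X (i+1) - X m := fun m hm =>
      sub_nonneg.2 (hmono (by have := Finset.mem_Ico.1 hm; omega))
    have hsingle : X (i+1) - X i ≤ ∑ m ∈ Finset.Ico (j+1) (i+1), (X (i+1) - X m) :=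
      Finset.single_le_sum hnn (Finset.mem_Ico.2 ⟨by omega, by omega⟩)
    have hd0 : 0 ≤ X (i+1) - X i := sub_nonneg.2 (hmono (by omega))
    have hdW : X (i+1) - X i ≤ W := by
      have h1 := hmono (Nat.zero_le i); have h2 := hmono (show i+1 ≤ s+1 by omega)
      rw [hW]; linarith
    have hmargin : Qn i * (X (i+1) - X i)^2 ≤ Qs * W * (X (i+1) - X i) := by
      nlinarith [mul_nonneg (mul_nonneg (sub_nonneg.2 (hQb i his)) hW0) hd0,
        mul_nonneg (mul_nonneg (hq i) hd0) (sub_nonneg.2 hdW)]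
    have hms : Qs * W * (X (i+1) - X i) ≤
        Qs * W * ∑ m ∈ Finset.Ico (j+1) (i+1), (X (i+1) - X m) :=
      mul_le_mul_of_nonneg_left hsingle hQW0
    have hMsum : M * ∑ m ∈ Finset.Ico (j+1) (i+1), (X (i+1) - X m) =
        Qs * W * ∑ m ∈ Finset.Ico (j+1) (i+1), (X (i+1) - X m) +
        Qs * W * ∑ m ∈ Finset.Ico (j+1) (i+1), (X (i+1) - X m) := by rw [hM]; ring
    have hid : Qn i * (X i)^2 + Ln i * X i + Cn i + M * (i:ℝ) * X i +
        -(M * ∑ m ∈ Finset.range i, X (m+1)) +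
        (X (i+1) - X i) * (2 * Qn i * X i + Ln i + M * (i:ℝ)) =
        Qn i * (X (i+1))^2 + Ln i * X (i+1) + Cn i + M * (i:ℝ) * X (i+1) +
        -(M * ∑ m ∈ Finset.range i, X (m+1)) - Qn i * (X (i+1) - X i)^2 := by ring
    dsimp only
    rw [hid]
    linarith
  · -- (7a)
    intro i j hij hjs
    have htel := aff_telescope M X (X (i+1)) i j (le_of_lt hij)
    have hS : ∑ m ∈ Finset.Ico (i+1) (j+1), (X (i+1) - X m) =
        -∑ m ∈ Finset.Ico (i+1) (j+1), (X m - X (i+1)) := by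
      rw [← Finset.sum_neg_distrib]
      exact Finset.sum_congr rfl fun m _ => by ring
    rw [hS, mul_neg] at htel
    have hsum := sumL i j (le_of_lt hij) hjs (X (i+1)) (hmono (by omega)) le_rfl
    have hnn : 0 ≤ ∑ m ∈ Finset.Ico (i+1) (j+1), (X m - X (i+1)) :=
      Finset.sum_nonneg fun m hm => sub_nonneg.2 (hmono (by
        have := Finset.mem_Ico.1 hm; omega))
    have hMsum : M * ∑ m ∈ Finset.Ico (i+1) (j+1), (X m - X (i+1)) =
        Qs * W * ∑ m ∈ Finset.Ico (i+1) (j+1), (X m - X (i+1)) +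
        Qs * W * ∑ m ∈ Finset.Ico (i+1) (j+1), (X m - X (i+1)) := by rw [hM]; ring
    have hpos := mul_nonneg hQW0 hnn
    dsimp only
    linarith
  · -- (7b)
    intro i j hij hjs
    have htel := aff_telescope M X (X i) i j (le_of_lt hij)
    have hS : ∑ m ∈ Finset.Ico (i+1) (j+1), (X i - X m) =
        -∑ m ∈ Finset.Ico (i+1) (j+1), (X m - X i) := by
      rw [← Finset.sum_neg_distrib]
      exact Finset.sum_congr rfl fun m _ => by ring
    rw [hS, mul_neg] at htel
    have hsum := sumL i j (le_of_lt hij) hjs (X i) (hmono (by omega)) (hmono (by omega))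
    have hnn : ∀ m ∈ Finset.Ico (i+1) (j+1), 0 ≤ X m - X i := fun m hm =>
      sub_nonneg.2 (hmono (by have := Finset.mem_Ico.1 hm; omega))
    have hsingle : X (i+1) - X i ≤ ∑ m ∈ Finset.Ico (i+1) (j+1), (X m - X i) :=
      Finset.single_le_sum hnn (Finset.mem_Ico.2 ⟨by omega, by omega⟩)
    have hd0 : 0 ≤ X (i+1) - X i := sub_nonneg.2 (hmono (by omega))
    have hdW : X (i+1) - X i ≤ W := by
      have h1 := hmono (Nat.zero_le i); have h2 := hmono (show i+1 ≤ s+1 by omega)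
      rw [hW]; linarith
    have hmargin : Qn i * (X (i+1) - X i)^2 ≤ Qs * W * (X (i+1) - X i) := by
      nlinarith [mul_nonneg (mul_nonneg (sub_nonneg.2 (hQb i (by omega))) hW0) hd0,
        mul_nonneg (mul_nonneg (hq i) hd0) (sub_nonneg.2 hdW)]
    have hms : Qs * W * (X (i+1) - X i) ≤
        Qs * W * ∑ m ∈ Finset.Ico (i+1) (j+1), (X m - X i) :=
      mul_le_mul_of_nonneg_left hsingle hQW0
    have hMsum : M * ∑ m ∈ Finset.Ico (i+1) (j+1), (X m - X i) =
        Qs * W * ∑ m ∈ Finset.Ico (i+1) (j+1), (X m - X i) +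
        Qs * W * ∑ m ∈ Finset.Ico (i+1) (j+1), (X m - X i) := by rw [hM]; ring
    have hid : Qn i * (X (i+1))^2 + Ln i * X (i+1) + Cn i + M * (i:ℝ) * X (i+1) +
        -(M * ∑ m ∈ Finset.range i, X (m+1)) -
        (X (i+1) - X i) * (2 * Qn i * X (i+1) + Ln i + M * (i:ℝ)) =
        Qn i * (X i)^2 + Ln i * X i + Cn i + M * (i:ℝ) * X i +
        -(M * ∑ m ∈ Finset.range i, X (m+1)) - Qn i * (X (i+1) - X i)^2 := by ring
    dsimp only
    rw [hid]
    linarith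

open Set

/-- Theorem 2: For every continuous convex PWQ function (data
`q, l, c` with `qᵢ ≥ 0` and nondecreasing one-sided slopes, on a strictly increasing
partition), the set of coefficients `(αᵢ, βᵢ)` satisfying the PWA continuity
conditions, the slope monotonicity conditions, and the dominance conditions (6)-(7)
is nonempty. -/
theorem feasible_pwa_coefficients_exist
    (s : ℕ)
    (x : Fin (s + 2) → ℝ) (hx : StrictMono x)
    (q l c : Fin (s + 1) → ℝ)
    (hq : ∀ i, 0 ≤ q i)
    (hkink : ∀ i : Fin s,
      2 * q i.castSucc * x i.castSucc.succ + l i.castSucc ≤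
        2 * q i.succ * x i.castSucc.succ + l i.succ)
    -- continuity of φ at the breakpoints
    (hφcont : ∀ i : Fin s,
      q i.castSucc * (x i.castSucc.succ) ^ 2 + l i.castSucc * x i.castSucc.succ + c i.castSucc =
        q i.succ * (x i.castSucc.succ) ^ 2 + l i.succ * x i.castSucc.succ + c i.succ) :
    ∃ α β : Fin (s + 1) → ℝ,
      -- continuity of h at the breakpoints
      (∀ i : Fin s,
        α i.castSucc * x i.castSucc.succ + β i.castSucc =
          α i.succ * x i.castSucc.succ + β i.succ) ∧
      -- convexity of h: nondecreasing slopes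
      (∀ i : Fin s, α i.castSucc ≤ α i.succ) ∧
      -- dominance conditions (6) for j < i
      (∀ i j : Fin (s + 1), j < i →
        q j * (x i.castSucc) ^ 2 + l j * x i.castSucc + c j + α j * x i.castSucc + β j ≤
          q i * (x i.castSucc) ^ 2 + l i * x i.castSucc + c i + α i * x i.castSucc + β i) ∧
      (∀ i j : Fin (s + 1), j < i →
        q j * (x i.succ) ^ 2 + l j * x i.succ + c j + α j * x i.succ + β j ≤
          q i * (x i.castSucc) ^ 2 + l i * x i.castSucc + c i + α i * x i.castSucc + β i +
            (x i.succ - x i.castSucc) * (2 * q i * x i.castSucc + l i + α i)) ∧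
      -- dominance conditions (7) for j > i
      (∀ i j : Fin (s + 1), i < j →
        q j * (x i.succ) ^ 2 + l j * x i.succ + c j + α j * x i.succ + β j ≤
          q i * (x i.succ) ^ 2 + l i * x i.succ + c i + α i * x i.succ + β i) ∧
      (∀ i j : Fin (s + 1), i < j →
        q j * (x i.castSucc) ^ 2 + l j * x i.castSucc + c j + α j * x i.castSucc + β j ≤
          q i * (x i.succ) ^ 2 + l i * x i.succ + c i + α i * x i.succ + β i -
            (x i.succ - x i.castSucc) * (2 * q i * x i.succ + l i + α i)) := by
  classical
  set X : ℕ → ℝ := fun n => x ⟨min n (s+1), by omega⟩ with hX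
  set Qn : ℕ → ℝ := fun n => q ⟨min n s, by omega⟩ with hQn
  set Ln : ℕ → ℝ := fun n => l ⟨min n s, by omega⟩ with hLn
  set Cn : ℕ → ℝ := fun n => c ⟨min n s, by omega⟩ with hCn
  have hmono : Monotone X := by
    intro a b hab
    exact (hx.monotone) (by simp [Fin.mk_le_mk]; omega)
  have hXv : ∀ (n : ℕ) (h : n ≤ s + 1), X n = x ⟨n, by omega⟩ := by
    intro n h
    simp only [hX]
    exact congrArg x (Fin.ext (by simp; omega))
  have hQv : ∀ (n : ℕ) (h : n ≤ s), Qn n = q ⟨n, by omega⟩ := by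
    intro n h
    simp only [hQn]
    exact congrArg q (Fin.ext (by simp; omega))
  have hLv : ∀ (n : ℕ) (h : n ≤ s), Ln n = l ⟨n, by omega⟩ := by
    intro n h
    simp only [hLn]
    exact congrArg l (Fin.ext (by simp; omega))
  have hCv : ∀ (n : ℕ) (h : n ≤ s), Cn n = c ⟨n, by omega⟩ := by
    intro n h
    simp only [hCn]
    exact congrArg c (Fin.ext (by simp; omega))
  have hqn : ∀ n, 0 ≤ Qn n := fun n => hq _
  have hkinkN : ∀ k, k < s → 2 * Qn k * X (k+1) + Ln k ≤ 2 * Qn (k+1) * X (k+1) + Ln (k+1) := by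
    intro k hk
    rw [hQv k (by omega), hQv (k+1) (by omega), hLv k (by omega), hLv (k+1) (by omega),
      hXv (k+1) (by omega)]
    exact hkink ⟨k, hk⟩
  have hcontN : ∀ k, k < s → Qn k * (X (k+1))^2 + Ln k * X (k+1) + Cn k =
      Qn (k+1) * (X (k+1))^2 + Ln (k+1) * X (k+1) + Cn (k+1) := by
    intro k hk
    rw [hQv k (by omega), hQv (k+1) (by omega), hLv k (by omega), hLv (k+1) (by omega),
      hCv k (by omega), hCv (k+1) (by omega), hXv (k+1) (by omega)]
    exact hφcont ⟨k, hk⟩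
  obtain ⟨A, B, hc1, hm1, h6a, h6b, h7a, h7b⟩ :=
    pwq_nat_version s X Qn Ln Cn hmono hqn hkinkN hcontN
  refine ⟨fun i => A i.val, fun i => B i.val, ?_, ?_, ?_, ?_, ?_, ?_⟩
  · intro k
    have h := hc1 k.val
    rw [hXv (k.val+1) (by omega)] at h
    exact h
  · intro k
    exact hm1 k.val
  · intro i j hij
    have h := h6a i.val j.val hij (Nat.lt_succ_iff.mp i.isLt)
    rw [hXv i.val (by omega), hQv i.val (by omega), hQv j.val (by omega),
      hLv i.val (by omega), hLv j.val (by omega), hCv i.val (by omega),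
      hCv j.val (by omega)] at h
    exact h
  · intro i j hij
    have h := h6b i.val j.val hij (Nat.lt_succ_iff.mp i.isLt)
    rw [hXv i.val (by omega), hXv (i.val+1) (by omega), hQv i.val (by omega),
      hQv j.val (by omega), hLv i.val (by omega), hLv j.val (by omega),
      hCv i.val (by omega), hCv j.val (by omega)] at h
    exact h
  · intro i j hij
    have h := h7a i.val j.val hij (Nat.lt_succ_iff.mp j.isLt)
    rw [hXv (i.val+1) (by omega), hQv i.val (by omega), hQv j.val (by omega),
      hLv i.val (by omega), hLv j.val (by omega), hCv i.val (by omega),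
      hCv j.val (by omega)] at h
    exact h
  · intro i j hij
    have h := h7b i.val j.val hij (Nat.lt_succ_iff.mp j.isLt)
    rw [hXv i.val (by omega), hXv (i.val+1) (by omega), hQv i.val (by omega),
      hQv j.val (by omega), hLv i.val (by omega), hLv j.val (by omega),
      hCv i.val (by omega), hCv j.val (by omega)] at h
    exact h
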